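/- arXiv:1412.8116 — 8 statements merged into one kernel-verified Lean document; each statement's English description precedes it below -/
import Mathlib

section
/- Let n ≥ 1 and let u, v be permutations of {1,…,n} with u ≼ v in the Bruhat order and u ≠ v. Let j be the smallest index with u(j) ≠ v(j); then u(j) < v(j). Moreover there exists an index k with j < k ≤ n and u(j) ≤ v(k) < v(j); let k be the least such index and let v' = v∘(j k) be v composed with the transposition of positions j and k. Then u ≼ v', v' ≼ v, and v' ≠ v. -/
/-- `r_w[p,q] = #{ j ≤ p : w(j) ≥ q }`, the rank numbers defining the Bruhat order
(here indices run over `Fin n`, i.e. positions and values are 0-based). -/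
def rPerm {n : ℕ} (w : Equiv.Perm (Fin n)) (p q : Fin n) : ℕ :=
  (Finset.univ.filter (fun j : Fin n => j ≤ p ∧ q ≤ w j)).card

/-- The Bruhat order on the symmetric group: `u ≼ v` iff `r_u[p,q] ≤ r_v[p,q]` for all `p, q`. -/
def BruhatLE {n : ℕ} (u v : Equiv.Perm (Fin n)) : Prop :=
  ∀ p q : Fin n, rPerm u p q ≤ rPerm v p q

namespace BruhatInterpolationAux

open Finset

variable {n : ℕ}

def ind (w : Equiv.Perm (Fin n)) (i q : ℕ) : ℕ :=
  if h : i < n then (if q ≤ ((w ⟨i, h⟩ : Fin n) : ℕ) then 1 else 0) else 0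

def S (w : Equiv.Perm (Fin n)) (p q : ℕ) : ℕ :=
  ∑ i ∈ Finset.range p, ind w i q

lemma ind_le_one (w : Equiv.Perm (Fin n)) (i q : ℕ) : ind w i q ≤ 1 := by
  unfold ind; split
  · split <;> omega
  · omega

lemma ind_val (w : Equiv.Perm (Fin n)) (i : Fin n) (q : ℕ) :
    ind w i.val q = if q ≤ ((w i : Fin n) : ℕ) then 1 else 0 := by
  unfold ind
  rw [dif_pos i.isLt, Fin.eta]

lemma ind_anti (w : Equiv.Perm (Fin n)) (i : ℕ) {q q' : ℕ} (h : q ≤ q') :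
    ind w i q' ≤ ind w i q := by
  unfold ind; split
  · rename_i hin
    by_cases h1 : q' ≤ ((w ⟨i, hin⟩ : Fin n) : ℕ)
    · rw [if_pos h1, if_pos (le_trans h h1)]
    · rw [if_neg h1]; split <;> omega
  · omega

lemma S_succ (w : Equiv.Perm (Fin n)) (p q : ℕ) :
    S w (p+1) q = S w p q + ind w p q :=
  Finset.sum_range_succ _ _

lemma rPerm_eq_S (w : Equiv.Perm (Fin n)) (p q : Fin n) :
    rPerm w p q = S w (p.val + 1) q.val := by
  classical
  rw [rPerm, Finset.card_filter]
  have h1 : ∀ i : Fin n,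
      (if i ≤ p ∧ q ≤ w i then (1:ℕ) else 0)
        = (fun m => if m ≤ p.val then ind w m q.val else 0) i.val := by
    intro i
    simp only [ind, i.isLt, dif_pos, Fin.eta, Fin.le_def]
    by_cases h2 : i.val ≤ p.val <;> by_cases h3 : q.val ≤ (w i).val <;>
      simp [h2, h3]
  rw [Finset.sum_congr rfl (fun i _ => h1 i),
    Fin.sum_univ_eq_sum_range (fun m => if m ≤ p.val then ind w m q.val else 0) n,
    ← Finset.sum_subset (Finset.range_subset_range.mpr p.isLt)
      (fun x _ hx => if_neg (fun hc => hx (Finset.mem_range.mpr (by omega))))]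
  exact Finset.sum_congr rfl fun i hi =>
    if_pos (by have := Finset.mem_range.mp hi; omega)

lemma key {u v : Equiv.Perm (Fin n)} {j k : Fin n}
    (hS : ∀ p q : ℕ, p ≤ n → q < n → S u p q ≤ S v p q)
    (hagree : ∀ i : Fin n, i < j → u i = v i)
    (hjk : j < k) (hk1 : u j ≤ v k) (hk2 : v k < v j)
    (hkmin : ∀ i : Fin n, j < i → i < k → ¬(u j ≤ v i ∧ v i < v j)) :
    ∀ p q : ℕ, j.val ≤ p → p < k.val → ((v k : Fin n) : ℕ) < q → q ≤ ((v j : Fin n) : ℕ) →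
      S u (p+1) q < S v (p+1) q := by
  have hk1' : ((u j : Fin n) : ℕ) ≤ ((v k : Fin n) : ℕ) := hk1
  have hk2' : ((v k : Fin n) : ℕ) < ((v j : Fin n) : ℕ) := hk2
  have hSagree : ∀ (m q : ℕ), m ≤ j.val → S u m q = S v m q := by
    intro m q hm
    refine Finset.sum_congr rfl fun i hi => ?_
    have hi' := Finset.mem_range.mp hi
    unfold ind
    split
    · rename_i hin
      rw [hagree ⟨i, hin⟩ (by rw [Fin.lt_def]; exact (by omega : i < j.val))]
    · rfl
  intro p q hjp
  induction p, hjp using Nat.le_induction with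
  | base =>
    intro hpk hq1 hq2
    rw [S_succ, S_succ, hSagree j.val q le_rfl,
      (ind_val u j q : ind u j.val q = _), (ind_val v j q : ind v j.val q = _),
      if_neg (by omega), if_pos hq2]
    omega
  | succ p hjp IH =>
    intro hpk hq1 hq2
    have hp' : p < k.val := by omega
    have IH' := IH hp' hq1 hq2
    have hpn : p + 1 < n := lt_trans hpk k.isLt
    set P : Fin n := ⟨p+1, hpn⟩ with hP
    have hiu : ind u (p+1) q = if q ≤ ((u P : Fin n) : ℕ) then 1 else 0 := ind_val u P q
    have hiv : ind v (p+1) q = if q ≤ ((v P : Fin n) : ℕ) then 1 else 0 := ind_val v P q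
    rw [S_succ u (p+1), S_succ v (p+1), hiu, hiv]
    by_cases hqu : q ≤ ((u P : Fin n) : ℕ)
    · by_cases hqv : q ≤ ((v P : Fin n) : ℕ)
      · rw [if_pos hqu, if_pos hqv]; omega
      · rw [if_pos hqu, if_neg hqv]
        by_cases heq : S u (p+1) q + 1 = S v (p+1) q
        · exfalso
          have hjP : j < P := by rw [Fin.lt_def]; simp only [hP]; omega
          have hPk : P < k := by rw [Fin.lt_def]; exact hpk
          have hvP : ((v P : Fin n) : ℕ) < ((u j : Fin n) : ℕ) := by
            by_contra hc
            exact hkmin P hjP hPk ⟨by rw [Fin.le_def]; omega, by rw [Fin.lt_def]; omega⟩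
          set uj : ℕ := ((u j : Fin n) : ℕ) with huj
          have hujq : uj < q := by omega
          have hpt : ∀ i ∈ Finset.range (p+1),
              ind v i uj + ind u i q + (if i = j.val then 1 else 0)
                ≤ ind u i uj + ind v i q := by
            intro i hi
            have hi' := Finset.mem_range.mp hi
            have hin : i < n := by omega
            set I : Fin n := ⟨i, hin⟩ with hI
            have hIval : i = I.val := rfl
            rcases lt_trichotomy i j.val with hij | hij | hij
            · have he : u I = v I := hagree I (by rw [Fin.lt_def]; exact hij)
              rw [if_neg (by omega), hIval, ind_val, ind_val, ind_val, ind_val, he]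
              omega
            · have hIj : I = j := by rw [Fin.ext_iff]; rw [← hIval]; exact hij
              rw [if_pos hij, hIval, ind_val, ind_val, ind_val, ind_val, hIj,
                if_pos (le_refl uj), if_pos (by omega : uj ≤ ((v j : Fin n) : ℕ)),
                if_neg (by omega : ¬ q ≤ uj), if_pos hq2]
            · have hjI : j < I := by rw [Fin.lt_def]; exact hij
              have hIk : I < k := by rw [Fin.lt_def]; omega
              have hnI : ((v I : Fin n) : ℕ) < uj ∨ ((v j : Fin n) : ℕ) ≤ ((v I : Fin n) : ℕ) := by
                by_contra hc
                push_neg at hc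
                exact hkmin I hjI hIk ⟨by rw [Fin.le_def]; omega, by rw [Fin.lt_def]; omega⟩
              have h1 : ind v i uj = ind v i q := by
                rw [hIval, ind_val, ind_val]
                rcases hnI with hx | hx
                · rw [if_neg (by omega), if_neg (by omega)]
                · rw [if_pos (by omega), if_pos (by omega)]
              have h2 : ind u i q ≤ ind u i uj := ind_anti u i (by omega)
              rw [if_neg (by omega)]
              omega
          have hsum := Finset.sum_le_sum hpt
          rw [Finset.sum_add_distrib, Finset.sum_add_distrib, Finset.sum_add_distrib] at hsum
          have hjmem : ∑ i ∈ Finset.range (p+1), (if i = j.val then (1:ℕ) else 0) = 1 := by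
            rw [Finset.sum_ite_eq' (Finset.range (p+1)) j.val (fun _ => (1:ℕ)),
              if_pos (Finset.mem_range.mpr (by omega))]
          rw [hjmem] at hsum
          have e1 : S v (p+1) uj = ∑ i ∈ Finset.range (p+1), ind v i uj := rfl
          have e2 : S u (p+1) uj = ∑ i ∈ Finset.range (p+1), ind u i uj := rfl
          have e3 : S u (p+1) q = ∑ i ∈ Finset.range (p+1), ind u i q := rfl
          have e4 : S v (p+1) q = ∑ i ∈ Finset.range (p+1), ind v i q := rfl
          have hSvu : S v (p+1) uj ≤ S u (p+1) uj := by omega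
          have hfinal := hS (p+2) uj (by omega) (by rw [huj]; exact (u j).isLt)
          have hiu2 : ind u (p+1) uj = 1 := by
            rw [(ind_val u P uj : ind u (p+1) uj = _), if_pos (by omega)]
          have hiv2 : ind v (p+1) uj = 0 := by
            rw [(ind_val v P uj : ind v (p+1) uj = _), if_neg (by omega)]
          rw [S_succ u (p+1), S_succ v (p+1), hiu2, hiv2] at hfinal
          omega
        · omega
    · rw [if_neg hqu]
      split <;> omega

lemma rPerm_eq_sum (w : Equiv.Perm (Fin n)) (p q : Fin n) :
    rPerm w p q = ∑ i : Fin n, if i ≤ p ∧ q ≤ w i then 1 else 0 := by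
  rw [rPerm, Finset.card_filter]

lemma rPerm_mul_swap (v : Equiv.Perm (Fin n)) (j k p q : Fin n) :
    rPerm (v * Equiv.swap j k) p q
      = ∑ i : Fin n, if Equiv.swap j k i ≤ p ∧ q ≤ v i then 1 else 0 := by
  rw [rPerm_eq_sum,
    ← Equiv.sum_comp (Equiv.swap j k)
      (fun m : Fin n => if Equiv.swap j k m ≤ p ∧ q ≤ v m then (1:ℕ) else 0)]
  refine Finset.sum_congr rfl fun i _ => ?_
  simp [Equiv.Perm.mul_apply, Equiv.swap_apply_self]
  exact if_congr Iff.rfl rfl rfl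

end BruhatInterpolationAux

open BruhatInterpolationAux in
/-- if `u ≺ v` (Bruhat) and `j` is the smallest position where they differ,
then `u j < v j`; there exists a position `k > j` with `u j ≤ v k < v j`; and for the least
such `k`, the permutation `v' = v ∘ (j k)` satisfies `u ≼ v'`, `v' ≼ v` and `v' ≠ v`. -/
theorem bruhat_interpolation {n : ℕ} (hn : 1 ≤ n) (u v : Equiv.Perm (Fin n))
    (huv : BruhatLE u v) (hne : u ≠ v)
    (j : Fin n) (hj : u j ≠ v j) (hjmin : ∀ j' : Fin n, j' < j → u j' = v j') :
    u j < v j ∧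
    (∃ k : Fin n, j < k ∧ u j ≤ v k ∧ v k < v j) ∧
    (∀ k : Fin n, (j < k ∧ u j ≤ v k ∧ v k < v j) →
      (∀ k' : Fin n, k' < k → ¬(j < k' ∧ u j ≤ v k' ∧ v k' < v j)) →
      BruhatLE u (v * Equiv.swap j k) ∧ BruhatLE (v * Equiv.swap j k) v ∧
        v * Equiv.swap j k ≠ v) := by
  classical
  have hS : ∀ p q : ℕ, p ≤ n → q < n → S u p q ≤ S v p q := by
    intro p q hp hq
    cases p with
    | zero => simp [S]
    | succ m =>
      have hm : m < n := by omega
      have h := huv ⟨m, hm⟩ ⟨q, hq⟩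
      rwa [rPerm_eq_S, rPerm_eq_S] at h
  have hSagree : ∀ (m q : ℕ), m ≤ j.val → S u m q = S v m q := by
    intro m q hm
    refine Finset.sum_congr rfl fun i hi => ?_
    have hi' := Finset.mem_range.mp hi
    unfold ind
    split
    · rename_i hin
      rw [hjmin ⟨i, hin⟩ (by rw [Fin.lt_def]; exact (by omega : i < j.val))]
    · rfl
  -- Part 1 : u j < v j
  have h1 : u j < v j := by
    have h := hS (j.val + 1) (u j).val (by have := j.isLt; omega) (u j).isLt
    rw [S_succ, S_succ, hSagree j.val _ le_rfl,
      (ind_val u j (u j).val : ind u j.val _ = _),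
      (ind_val v j (u j).val : ind v j.val _ = _), if_pos le_rfl] at h
    have hle : (u j).val ≤ (v j).val := by
      by_contra hc
      rw [if_neg hc] at h
      omega
    rw [Fin.lt_def]
    rcases lt_or_eq_of_le hle with h' | h'
    · exact h'
    · exact absurd (Fin.val_injective h') hj
  refine ⟨h1, ?_, ?_⟩
  -- Part 2 : existence of k
  · refine ⟨v.symm (u j), ?_, ?_, ?_⟩
    · have hne1 : v.symm (u j) ≠ j := by
        intro h
        apply hj
        rw [← Equiv.apply_symm_apply v (u j), h]
      have hnlt : ¬ v.symm (u j) < j := by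
        intro h
        have h2 := hjmin _ h
        have h3 : u (v.symm (u j)) = u j := by
          rw [h2, Equiv.apply_symm_apply]
        exact hne1 (u.injective h3)
      exact lt_of_le_of_ne (le_of_not_gt hnlt) (Ne.symm hne1)
    · rw [Equiv.apply_symm_apply]
    · rw [Equiv.apply_symm_apply]; exact h1
  -- Part 3
  · intro k hk hkmin'
    obtain ⟨hjk, hk1, hk2⟩ := hk
    have hkmin : ∀ i : Fin n, j < i → i < k → ¬(u j ≤ v i ∧ v i < v j) :=
      fun i hji hik hc => hkmin' i hik ⟨hji, hc.1, hc.2⟩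
    have hkey := key hS hjmin hjk hk1 hk2 hkmin
    have hkj : k ≠ j := ne_of_gt hjk
    have hsplit : ∀ g : Fin n → ℕ,
        ∑ i, g i = g j + (g k + ∑ i ∈ (Finset.univ.erase j).erase k, g i) := by
      intro g
      rw [← Finset.add_sum_erase _ g (Finset.mem_univ j),
        ← Finset.add_sum_erase _ g (Finset.mem_erase.mpr ⟨hkj, Finset.mem_univ k⟩)]
    have htail : ∀ p q : Fin n,
        ∑ i ∈ (Finset.univ.erase j).erase k,
            (if Equiv.swap j k i ≤ p ∧ q ≤ v i then (1:ℕ) else 0)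
          = ∑ i ∈ (Finset.univ.erase j).erase k,
              (if i ≤ p ∧ q ≤ v i then (1:ℕ) else 0) := by
      intro p q
      refine Finset.sum_congr rfl fun i hi => ?_
      have h1 := Finset.mem_erase.mp hi
      have h2 := Finset.mem_erase.mp h1.2
      rw [Equiv.swap_apply_of_ne_of_ne h2.1 h1.1]
    have hformula : ∀ p q : Fin n,
        rPerm (v * Equiv.swap j k) p q
          = (if k ≤ p ∧ q ≤ v j then 1 else 0) + ((if j ≤ p ∧ q ≤ v k then 1 else 0)
              + ∑ i ∈ (Finset.univ.erase j).erase k, (if i ≤ p ∧ q ≤ v i then (1:ℕ) else 0)) := by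
      intro p q
      rw [rPerm_mul_swap, hsplit, htail, Equiv.swap_apply_left, Equiv.swap_apply_right]
    have hvformula : ∀ p q : Fin n,
        rPerm v p q
          = (if j ≤ p ∧ q ≤ v j then 1 else 0) + ((if k ≤ p ∧ q ≤ v k then 1 else 0)
              + ∑ i ∈ (Finset.univ.erase j).erase k, (if i ≤ p ∧ q ≤ v i then (1:ℕ) else 0)) := by
      intro p q
      rw [rPerm_eq_sum, hsplit]
    refine ⟨?_, ?_, ?_⟩
    · -- u ≼ v * swap j k
      intro p q
      rw [hformula p q]
      by_cases hpj : p < j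
      · have hnjp : ¬ j ≤ p := not_le_of_gt hpj
        have hnkp : ¬ k ≤ p := fun h => hnjp (le_trans (le_of_lt hjk) h)
        have := huv p q
        rw [hvformula p q, if_neg (by tauto), if_neg (by tauto)] at this
        rw [if_neg (by tauto), if_neg (by tauto)]
        omega
      · by_cases hpk : k ≤ p
        · have hjp : j ≤ p := le_trans (le_of_lt hjk) hpk
          have := huv p q
          rw [hvformula p q] at this
          by_cases hq1 : q ≤ v j <;> by_cases hq2 : q ≤ v k
          · rw [if_pos ⟨hpk, hq1⟩, if_pos ⟨hjp, hq2⟩]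
            rw [if_pos ⟨hjp, hq1⟩, if_pos ⟨hpk, hq2⟩] at this
            omega
          · rw [if_pos ⟨hpk, hq1⟩,
              if_neg (show ¬(j ≤ p ∧ q ≤ v k) from fun hc => hq2 hc.2)]
            rw [if_pos ⟨hjp, hq1⟩,
              if_neg (show ¬(k ≤ p ∧ q ≤ v k) from fun hc => hq2 hc.2)] at this
            omega
          · exact absurd (le_trans hq2 (le_of_lt hk2)) hq1
          · rw [if_neg (show ¬(k ≤ p ∧ q ≤ v j) from fun hc => hq1 hc.2),
              if_neg (show ¬(j ≤ p ∧ q ≤ v k) from fun hc => hq2 hc.2)]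
            rw [if_neg (show ¬(j ≤ p ∧ q ≤ v j) from fun hc => hq1 hc.2),
              if_neg (show ¬(k ≤ p ∧ q ≤ v k) from fun hc => hq2 hc.2)] at this
            omega
        · -- j ≤ p < k
          have hjp : j ≤ p := le_of_not_gt hpj
          have hpk' : p < k := lt_of_not_ge hpk
          rw [if_neg (fun hc => hpk hc.1)]
          by_cases hq2 : q ≤ v k
          · have hq1 : q ≤ v j := le_trans hq2 (le_of_lt hk2)
            have := huv p q
            rw [hvformula p q, if_pos ⟨hjp, hq1⟩, if_neg (fun hc => hpk hc.1)] at this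
            rw [if_pos ⟨hjp, hq2⟩]
            omega
          · by_cases hq1 : q ≤ v j
            · -- strict region
              have hs := hkey p.val q.val (Fin.le_def.mp hjp) (Fin.lt_def.mp hpk')
                (by have := Fin.lt_def.mp (lt_of_not_ge hq2); omega) (Fin.le_def.mp hq1)
              rw [← rPerm_eq_S, ← rPerm_eq_S] at hs
              have hv := hvformula p q
              rw [if_pos ⟨hjp, hq1⟩, if_neg (fun hc => hpk hc.1)] at hv
              rw [if_neg (fun hc => hq2 hc.2)]
              omega
            · have := huv p q
              rw [hvformula p q, if_neg (fun hc => hq1 hc.2), if_neg (fun hc => hpk hc.1)] at this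
              rw [if_neg (fun hc => hq2 hc.2)]
              omega
    · -- v * swap j k ≼ v
      intro p q
      rw [hformula p q, hvformula p q]
      have himp1 : k ≤ p → j ≤ p := fun h => le_trans (le_of_lt hjk) h
      have himp2 : q ≤ v k → q ≤ v j := fun h => le_trans h (le_of_lt hk2)
      by_cases h2 : k ≤ p
      · have h1 : j ≤ p := himp1 h2
        by_cases h3 : q ≤ v j <;> by_cases h4 : q ≤ v k
        · rw [if_pos ⟨h2, h3⟩, if_pos ⟨h1, h4⟩, if_pos ⟨h1, h3⟩, if_pos ⟨h2, h4⟩]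
        · rw [if_pos ⟨h2, h3⟩,
            if_neg (show ¬(j ≤ p ∧ q ≤ v k) from fun hc => h4 hc.2),
            if_pos ⟨h1, h3⟩,
            if_neg (show ¬(k ≤ p ∧ q ≤ v k) from fun hc => h4 hc.2)]
        · exact absurd (himp2 h4) h3
        · rw [if_neg (show ¬(k ≤ p ∧ q ≤ v j) from fun hc => h3 hc.2),
            if_neg (show ¬(j ≤ p ∧ q ≤ v k) from fun hc => h4 hc.2),
            if_neg (show ¬(j ≤ p ∧ q ≤ v j) from fun hc => h3 hc.2),
            if_neg (show ¬(k ≤ p ∧ q ≤ v k) from fun hc => h4 hc.2)]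
      · by_cases h1 : j ≤ p
        · rw [if_neg (show ¬(k ≤ p ∧ q ≤ v j) from fun hc => h2 hc.1),
            if_neg (show ¬(k ≤ p ∧ q ≤ v k) from fun hc => h2 hc.1)]
          by_cases h4 : q ≤ v k
          · rw [if_pos ⟨h1, h4⟩, if_pos ⟨h1, himp2 h4⟩]
            omega
          · rw [if_neg (show ¬(j ≤ p ∧ q ≤ v k) from fun hc => h4 hc.2)]
            omega
        · rw [if_neg (show ¬(k ≤ p ∧ q ≤ v j) from fun hc => h1 (himp1 hc.1)),
            if_neg (show ¬(j ≤ p ∧ q ≤ v k) from fun hc => h1 hc.1),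
            if_neg (show ¬(j ≤ p ∧ q ≤ v j) from fun hc => h1 hc.1),
            if_neg (show ¬(k ≤ p ∧ q ≤ v k) from fun hc => h1 (himp1 hc.1))]
    · -- v * swap j k ≠ v
      intro h
      have h2 : (v * Equiv.swap j k) j = v j := by rw [h]
      rw [Equiv.Perm.mul_apply, Equiv.swap_apply_left] at h2
      exact absurd h2 (ne_of_lt hk2)
end

section
/- Let I = (i₁,…,i_k) be a composition of n and let U, V ∈ S_n^I with U ≼ V in the Bruhat order on S_n^I and U ≠ V. Let j₀ be the least index with U(j₀) ≠ V(j₀); then U(j₀) < V(j₀). Let l ≥ j₀ be the maximal index with V(j₀) = V(j₀+1) = ⋯ = V(l). Then there exists m with l < m ≤ n and U(j₀) ≤ V(m) < V(l); let m be the least such index and let V' = V∘(l m) be V with the values at positions l and m swapped. Then U ≼ V', V' ≼ V, and V' ≠ V. -/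
/-- `r_τ[p,q] = #{ j ≤ p : τ(j) ≥ q }` for a multiset permutation `τ : Fin n → Fin k`. -/
def rMulti {n k : ℕ} (τ : Fin n → Fin k) (p : Fin n) (q : Fin k) : ℕ :=
  (Finset.univ.filter (fun j : Fin n => j ≤ p ∧ q ≤ τ j)).card

/-- Bruhat order on multiset permutations `S_n^I`. -/
def MBruhatLE {n k : ℕ} (τ υ : Fin n → Fin k) : Prop :=
  ∀ (p : Fin n) (q : Fin k), rMulti τ p q ≤ rMulti υ p q

/-- `I = (i₁,…,i_k)` is a composition of `n`: all parts positive with sum `n`. -/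
def IsComposition {k : ℕ} (n : ℕ) (I : Fin k → ℕ) : Prop :=
  (∀ j, 0 < I j) ∧ Finset.univ.sum I = n

/-- `τ : Fin n → Fin k` is an `I`-multiset permutation: the fibre over `j` has `i_j` elements. -/
def IsMultisetPerm {n k : ℕ} (I : Fin k → ℕ) (τ : Fin n → Fin k) : Prop :=
  ∀ j : Fin k, (Finset.univ.filter (fun l : Fin n => τ l = j)).card = I j

open Finset in
lemma rMulti_split {n k : ℕ} (τ : Fin n → Fin k) (p : Fin n) {x y : Fin k} (hxy : x ≤ y) :
    rMulti τ p x = rMulti τ p y +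
      (Finset.univ.filter (fun j : Fin n => j ≤ p ∧ x ≤ τ j ∧ τ j < y)).card := by
  unfold rMulti
  rw [← Finset.card_union_of_disjoint]
  · congr 1
    ext j
    simp only [Finset.mem_filter, Finset.mem_union, Finset.mem_univ, true_and]
    constructor
    · rintro ⟨h1, h2⟩
      by_cases h : y ≤ τ j
      · exact Or.inl ⟨h1, h⟩
      · exact Or.inr ⟨h1, h2, lt_of_not_ge h⟩
    · rintro (⟨h1, h2⟩ | ⟨h1, h2, _⟩)
      exacts [⟨h1, le_trans hxy h2⟩, ⟨h1, h2⟩]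
  · rw [Finset.disjoint_left]
    rintro j hj hj'
    simp only [Finset.mem_filter, Finset.mem_univ, true_and] at hj hj'
    exact absurd hj.2 (not_le.mpr hj'.2.2)

open Finset in
lemma rMulti_swap_of_le {n k : ℕ} (V : Fin n → Fin k) {l m p : Fin n} (hlm : l < m)
    (hmp : m ≤ p) (q' : Fin k) :
    rMulti (V ∘ Equiv.swap l m) p q' = rMulti V p q' := by
  have hswap_le : ∀ j : Fin n, j ≤ p → Equiv.swap l m j ≤ p := by
    intro j hj
    by_cases h1 : j = l
    · subst h1; rw [Equiv.swap_apply_left]; exact hmp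
    by_cases h2 : j = m
    · subst h2; rw [Equiv.swap_apply_right]; exact le_trans hlm.le hmp
    · rw [Equiv.swap_apply_of_ne_of_ne h1 h2]; exact hj
  unfold rMulti
  apply Finset.card_bij' (fun j _ => Equiv.swap l m j) (fun j _ => Equiv.swap l m j)
  · intro a ha
    simp only [Finset.mem_filter, Finset.mem_univ, true_and, Function.comp_apply] at ha ⊢
    exact ⟨hswap_le a ha.1, ha.2⟩
  · intro a ha
    simp only [Finset.mem_filter, Finset.mem_univ, true_and, Function.comp_apply] at ha ⊢
    refine ⟨hswap_le a ha.1, ?_⟩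
    rw [Equiv.swap_apply_self]
    exact ha.2
  · intro a _; exact Equiv.swap_apply_self _ _ _
  · intro a _; exact Equiv.swap_apply_self _ _ _

open Finset in
lemma rMulti_swap_of_lt {n k : ℕ} (V : Fin n → Fin k) {l m p : Fin n} (hpl : p < l)
    (hlm : l < m) (q' : Fin k) :
    rMulti (V ∘ Equiv.swap l m) p q' = rMulti V p q' := by
  unfold rMulti
  congr 1
  apply Finset.filter_congr
  intro j _
  by_cases hj : j ≤ p
  · have h1 : j ≠ l := ne_of_lt (lt_of_le_of_lt hj hpl)
    have h2 : j ≠ m := ne_of_lt (lt_of_le_of_lt hj (lt_trans hpl hlm))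
    simp [Function.comp_apply, Equiv.swap_apply_of_ne_of_ne h1 h2]
  · simp [hj]

open Finset in
lemma key_strict {n k : ℕ} (U V : Fin n → Fin k) (hUV : MBruhatLE U V)
    (j₀ l m p : Fin n) (q' : Fin k)
    (hj₀min : ∀ j' : Fin n, j' < j₀ → U j' = V j')
    (hl : j₀ ≤ l)
    (hlconst : ∀ x : Fin n, j₀ ≤ x → x ≤ l → V x = V j₀)
    (hmmin : ∀ m' : Fin n, m' < m → ¬(l < m' ∧ U j₀ ≤ V m' ∧ V m' < V l))
    (hlp : l ≤ p) (hpm : p < m)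
    (hq : U j₀ < q') (hqc : q' ≤ V j₀) :
    rMulti U p q' + 1 ≤ rMulti V p q' := by
  set q := U j₀ with hqdef
  have hVl : V l = V j₀ := hlconst l hl le_rfl
  set WU := Finset.univ.filter (fun j : Fin n => j ≤ p ∧ q ≤ U j ∧ U j < q') with hWU
  set WV := Finset.univ.filter (fun j : Fin n => j ≤ p ∧ q ≤ V j ∧ V j < q') with hWV
  have h1 : rMulti U p q = rMulti U p q' + WU.card := rMulti_split U p hq.le
  have h2 : rMulti V p q = rMulti V p q' + WV.card := rMulti_split V p hq.le
  have h4 : j₀ ∈ WU := by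
    simp only [hWU, Finset.mem_filter, Finset.mem_univ, true_and]
    exact ⟨le_trans hl hlp, le_refl _, hq⟩
  have h3 : WV ⊆ WU.erase j₀ := by
    intro j hj
    simp only [hWV, Finset.mem_filter, Finset.mem_univ, true_and] at hj
    obtain ⟨hjp, hq1, hq2⟩ := hj
    have hjj₀ : j < j₀ := by
      by_contra h
      push_neg at h
      by_cases hjl : j ≤ l
      · rw [hlconst j h hjl] at hq2
        exact absurd hq2 (not_lt.mpr hqc)
      · push_neg at hjl
        exact hmmin j (lt_of_le_of_lt hjp hpm)
          ⟨hjl, hq1, by rw [hVl]; exact lt_of_lt_of_le hq2 hqc⟩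
    have hUj : U j = V j := hj₀min j hjj₀
    simp only [Finset.mem_erase, hWU, Finset.mem_filter, Finset.mem_univ, true_and]
    exact ⟨ne_of_lt hjj₀, hjp, by rw [hUj]; exact hq1, by rw [hUj]; exact hq2⟩
  have h5 := Finset.card_le_card h3
  have h6 : (WU.erase j₀).card = WU.card - 1 := Finset.card_erase_of_mem h4
  have h7 : 1 ≤ WU.card := Finset.card_pos.mpr ⟨j₀, h4⟩
  have h8 := hUV p q
  omega

open Finset in
lemma count_window {n k : ℕ} (I : Fin k → ℕ) (τ : Fin n → Fin k) (hτ : IsMultisetPerm I τ)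
    (q c : Fin k) :
    (Finset.univ.filter (fun j : Fin n => q ≤ τ j ∧ τ j < c)).card
      = ∑ v ∈ Finset.univ.filter (fun v : Fin k => q ≤ v ∧ v < c), I v := by
  rw [Finset.card_eq_sum_card_fiberwise (f := τ)
      (t := Finset.univ.filter (fun v : Fin k => q ≤ v ∧ v < c))
      (by intro j hj; simp only [Finset.mem_coe, Finset.mem_filter, Finset.mem_univ, true_and] at hj ⊢; exact hj)]
  apply Finset.sum_congr rfl
  intro v hv
  simp only [Finset.mem_filter, Finset.mem_univ, true_and] at hv
  rw [← hτ v]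
  congr 1
  ext j
  simp only [Finset.mem_filter, Finset.mem_univ, true_and]
  constructor
  · rintro ⟨_, h⟩; exact h
  · rintro h; exact ⟨by rw [h]; exact hv, h⟩

/-- if `U ≺ V` in `S_n^I`, `j₀` is the least position where they differ, and
`l ≥ j₀` is maximal with `V` constant on `[j₀, l]`, then `U j₀ < V j₀`; there is `m > l`
with `U j₀ ≤ V m < V l`; and for the least such `m`, setting `V' = V ∘ (l m)` one has
`U ≼ V'`, `V' ≼ V`, `V' ≠ V`. -/
theorem multiset_bruhat_interpolation {n k : ℕ} (I : Fin k → ℕ) (hI : IsComposition n I)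
    (U V : Fin n → Fin k) (hU : IsMultisetPerm I U) (hV : IsMultisetPerm I V)
    (hUV : MBruhatLE U V) (hne : U ≠ V)
    (j₀ : Fin n) (hj₀ : U j₀ ≠ V j₀) (hj₀min : ∀ j' : Fin n, j' < j₀ → U j' = V j')
    (l : Fin n) (hl : j₀ ≤ l) (hlconst : ∀ x : Fin n, j₀ ≤ x → x ≤ l → V x = V j₀)
    (hlmax : ∀ l' : Fin n, l < l' → ¬ (∀ x : Fin n, j₀ ≤ x → x ≤ l' → V x = V j₀)) :
    U j₀ < V j₀ ∧
    (∃ m : Fin n, l < m ∧ U j₀ ≤ V m ∧ V m < V l) ∧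
    (∀ m : Fin n, (l < m ∧ U j₀ ≤ V m ∧ V m < V l) →
      (∀ m' : Fin n, m' < m → ¬(l < m' ∧ U j₀ ≤ V m' ∧ V m' < V l)) →
      MBruhatLE U (V ∘ Equiv.swap l m) ∧ MBruhatLE (V ∘ Equiv.swap l m) V ∧
        V ∘ Equiv.swap l m ≠ V) := by
  have hVl : V l = V j₀ := hlconst l hl le_rfl
  -- Part 1 : U j₀ < V j₀
  have part1 : U j₀ < V j₀ := by
    rcases lt_or_ge (U j₀) (V j₀) with h | h
    · exact h
    exfalso
    -- then ¬ (U j₀ ≤ V j₀) since they differ, so V j₀ < U j₀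
    have hlt : V j₀ < U j₀ := lt_of_le_of_ne h (Ne.symm hj₀)
    set q := U j₀ with hq
    have hsub : Finset.univ.filter (fun j : Fin n => j ≤ j₀ ∧ q ≤ V j)
        ⊆ (Finset.univ.filter (fun j : Fin n => j ≤ j₀ ∧ q ≤ U j)).erase j₀ := by
      intro j hj
      simp only [Finset.mem_filter, Finset.mem_univ, true_and] at hj
      obtain ⟨hjp, hq1⟩ := hj
      have hne' : j ≠ j₀ := by
        rintro rfl
        exact absurd hq1 (not_le.mpr hlt)
      have hjlt : j < j₀ := lt_of_le_of_ne hjp hne'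
      simp only [Finset.mem_erase, Finset.mem_filter, Finset.mem_univ, true_and]
      exact ⟨hne', hjp, by rw [hj₀min j hjlt]; exact hq1⟩
    have hmem : j₀ ∈ Finset.univ.filter (fun j : Fin n => j ≤ j₀ ∧ q ≤ U j) := by
      simp only [Finset.mem_filter, Finset.mem_univ, true_and]
      exact ⟨le_refl _, le_refl _⟩
    have h5 := Finset.card_le_card hsub
    have h6 := Finset.card_erase_of_mem hmem
    have h7 := Finset.card_pos.mpr ⟨j₀, hmem⟩
    have h8 := hUV j₀ q
    unfold rMulti at h8
    omega
  set q := U j₀ with hqdef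
  set c := V j₀ with hcdef
  -- Part 2 : existence of m
  have part2 : ∃ m : Fin n, l < m ∧ U j₀ ≤ V m ∧ V m < V l := by
    by_contra hcon
    push_neg at hcon
    -- compare the windows [q, c) of U and V over all positions
    have hcount : (Finset.univ.filter (fun j : Fin n => q ≤ U j ∧ U j < c)).card
        = (Finset.univ.filter (fun j : Fin n => q ≤ V j ∧ V j < c)).card := by
      rw [count_window I U hU q c, count_window I V hV q c]
    have hsub : Finset.univ.filter (fun j : Fin n => q ≤ V j ∧ V j < c)
        ⊆ (Finset.univ.filter (fun j : Fin n => q ≤ U j ∧ U j < c)).erase j₀ := by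
      intro j hj
      simp only [Finset.mem_filter, Finset.mem_univ, true_and] at hj
      obtain ⟨hq1, hq2⟩ := hj
      have hjlt : j < j₀ := by
        by_contra hcon2
        push_neg at hcon2
        by_cases hjl : j ≤ l
        · rw [hlconst j hcon2 hjl] at hq2
          exact absurd hq2 (lt_irrefl c)
        · push_neg at hjl
          exact absurd (hcon j hjl hq1) (not_le.mpr (by rw [hVl]; exact hq2))
      simp only [Finset.mem_erase, Finset.mem_filter, Finset.mem_univ, true_and]
      refine ⟨ne_of_lt hjlt, ?_, ?_⟩ <;> rw [hj₀min j hjlt] <;> assumption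
    have hmem : j₀ ∈ Finset.univ.filter (fun j : Fin n => q ≤ U j ∧ U j < c) := by
      simp only [Finset.mem_filter, Finset.mem_univ, true_and]
      exact ⟨le_refl _, part1⟩
    have h5 := Finset.card_le_card hsub
    have h6 := Finset.card_erase_of_mem hmem
    have h7 := Finset.card_pos.mpr ⟨j₀, hmem⟩
    omega
  refine ⟨part1, part2, ?_⟩
  rintro m ⟨hlm, hqVm, hVmVl⟩ hmmin
  -- auxiliary : in the middle zone, sets description
  have hmid_eq : ∀ (p : Fin n) (q' : Fin k), l ≤ p → p < m →
      ((q' ≤ V m) ∨ (V l < q')) →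
      rMulti (V ∘ Equiv.swap l m) p q' = rMulti V p q' := by
    intro p q' hlp hpm hcase
    unfold rMulti
    congr 1
    apply Finset.filter_congr
    intro j _
    by_cases hj : j ≤ p
    · have hjm : j ≠ m := ne_of_lt (lt_of_le_of_lt hj hpm)
      by_cases hjl : j = l
      · subst hjl
        simp only [hj, true_and, Function.comp_apply, Equiv.swap_apply_left, eq_iff_iff]
        rcases hcase with h | h
        · constructor <;> intro _
          · exact h.trans hVmVl.le
          · exact h
        · constructor <;> intro h'
          · exact absurd (h'.trans hVmVl.le) (not_le.mpr h)
          · exact absurd h' (not_le.mpr h)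
      · simp [Function.comp_apply, Equiv.swap_apply_of_ne_of_ne hjl hjm]
    · simp [hj]
  have hmid_erase : ∀ (p : Fin n) (q' : Fin k), l ≤ p → p < m →
      V m < q' → q' ≤ V l →
      rMulti (V ∘ Equiv.swap l m) p q' + 1 = rMulti V p q' := by
    intro p q' hlp hpm h1 h2
    unfold rMulti
    have hset : Finset.univ.filter (fun j : Fin n => j ≤ p ∧ q' ≤ (V ∘ Equiv.swap l m) j)
        = (Finset.univ.filter (fun j : Fin n => j ≤ p ∧ q' ≤ V j)).erase l := by
      ext j
      simp only [Finset.mem_erase, Finset.mem_filter, Finset.mem_univ, true_and,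
        Function.comp_apply]
      constructor
      · rintro ⟨hjp, hq'⟩
        have hjm : j ≠ m := ne_of_lt (lt_of_le_of_lt hjp hpm)
        by_cases hjl : j = l
        · subst hjl
          rw [Equiv.swap_apply_left] at hq'
          exact absurd hq' (not_le.mpr h1)
        · rw [Equiv.swap_apply_of_ne_of_ne hjl hjm] at hq'
          exact ⟨hjl, hjp, hq'⟩
      · rintro ⟨hjl, hjp, hq'⟩
        have hjm : j ≠ m := ne_of_lt (lt_of_le_of_lt hjp hpm)
        rw [Equiv.swap_apply_of_ne_of_ne hjl hjm]
        exact ⟨hjp, hq'⟩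
    have hmem : l ∈ Finset.univ.filter (fun j : Fin n => j ≤ p ∧ q' ≤ V j) := by
      simp only [Finset.mem_filter, Finset.mem_univ, true_and]
      exact ⟨hlp, h2⟩
    rw [hset, Finset.card_erase_of_mem hmem]
    have := Finset.card_pos.mpr ⟨l, hmem⟩
    omega
  refine ⟨?_, ?_, ?_⟩
  · -- U ≼ V'
    intro p q'
    rcases le_or_gt m p with hmp | hpm
    · rw [rMulti_swap_of_le V hlm hmp]; exact hUV p q'
    rcases lt_or_ge p l with hpl | hlp
    · rw [rMulti_swap_of_lt V hpl hlm]; exact hUV p q'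
    by_cases hcase : (q' ≤ V m) ∨ (V l < q')
    · rw [hmid_eq p q' hlp hpm hcase]; exact hUV p q'
    · push_neg at hcase
      obtain ⟨h1, h2⟩ := hcase
      have hkey := key_strict U V hUV j₀ l m p q' hj₀min hl hlconst hmmin hlp hpm
        (lt_of_le_of_lt hqVm h1) (h2.trans hVl.le)
      have := hmid_erase p q' hlp hpm h1 h2
      omega
  · -- V' ≼ V
    intro p q'
    rcases le_or_gt m p with hmp | hpm
    · rw [rMulti_swap_of_le V hlm hmp]
    rcases lt_or_ge p l with hpl | hlp
    · rw [rMulti_swap_of_lt V hpl hlm]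
    by_cases hcase : (q' ≤ V m) ∨ (V l < q')
    · rw [hmid_eq p q' hlp hpm hcase]
    · push_neg at hcase
      obtain ⟨h1, h2⟩ := hcase
      have := hmid_erase p q' hlp hpm h1 h2
      omega
  · -- V' ≠ V
    intro h
    have := congrFun h l
    simp only [Function.comp_apply, Equiv.swap_apply_left] at this
    exact absurd this (ne_of_lt hVmVl)
end

section
/- Let I = (i₁,…,i_k) be a composition of n and let ξ, ζ ∈ S_n^I with ξ ≼ ζ in the Bruhat order on S_n^I. Let s_ξ, s_ζ ∈ S_n be the I-deshuffles of ξ and ζ respectively. Then s_ξ ≼ s_ζ in the Bruhat order on S_n. -/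
/-- `τ₁` is the standard multiset permutation of type `I`. -/
def IsTauOne {n k : ℕ} (I : Fin k → ℕ) (τ₁ : Fin n → Fin k) : Prop :=
  ∀ l : Fin n, (Finset.univ.filter (fun j : Fin k => j < τ₁ l)).sum I ≤ l.val ∧
    l.val < (Finset.univ.filter (fun j : Fin k => j ≤ τ₁ l)).sum I

/-- `s` is the `I`-deshuffle of `υ`: `τ₁ ∘ s = υ` and `s` is increasing on the positions
of each fixed value of `υ`. -/
def IsDeshuffle {n k : ℕ} (τ₁ υ : Fin n → Fin k) (s : Equiv.Perm (Fin n)) : Prop :=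
  (∀ l, τ₁ (s l) = υ l) ∧ ∀ a b : Fin n, a < b → υ a = υ b → s a < s b

/-- if `ξ ≼ ζ` in the Bruhat order on `S_n^I`, then the corresponding
`I`-deshuffles satisfy `s_ξ ≼ s_ζ` in the Bruhat order on `S_n`. -/
theorem deshuffle_monotone {n k : ℕ} (I : Fin k → ℕ) (hI : IsComposition n I)
    (τ₁ : Fin n → Fin k) (hτ₁ : IsTauOne I τ₁)
    (ξ ζ : Fin n → Fin k) (hξ : IsMultisetPerm I ξ) (hζ : IsMultisetPerm I ζ)
    (hle : MBruhatLE ξ ζ)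
    (sξ sζ : Equiv.Perm (Fin n)) (hsξ : IsDeshuffle τ₁ ξ sξ) (hsζ : IsDeshuffle τ₁ ζ sζ) :
    BruhatLE sξ sζ := by
  classical
  obtain ⟨hsξ1, hsξ2⟩ := hsξ
  obtain ⟨hsζ1, hsζ2⟩ := hsζ
  -- τ₁ is monotone
  have hmono : ∀ a b : Fin n, a ≤ b → τ₁ a ≤ τ₁ b := by
    intro a b hab
    by_contra h
    push_neg at h
    have h1 := (hτ₁ b).2
    have h2 := (hτ₁ a).1
    have hsub : (Finset.univ.filter (fun j : Fin k => j ≤ τ₁ b))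
        ⊆ (Finset.univ.filter (fun j : Fin k => j < τ₁ a)) := by
      intro j hj
      simp only [Finset.mem_filter, Finset.mem_univ, true_and] at hj ⊢
      exact lt_of_le_of_lt hj h
    have hs : (Finset.univ.filter (fun j : Fin k => j ≤ τ₁ b)).sum I
        ≤ (Finset.univ.filter (fun j : Fin k => j < τ₁ a)).sum I :=
      Finset.sum_le_sum_of_subset hsub
    have hab' : a.val ≤ b.val := hab
    omega
  intro p q
  set c := τ₁ q with hc
  -- basic facts for a deshuffle pair
  have facts : ∀ (τ : Fin n → Fin k) (s : Equiv.Perm (Fin n)),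
      (∀ l, τ₁ (s l) = τ l) → ∀ j, (c < τ j → q ≤ s j) ∧ (q ≤ s j → c ≤ τ j) := by
    intro τ s hs j
    constructor
    · intro hlt
      by_contra hcon
      push_neg at hcon
      have h := hmono (s j) q (le_of_lt hcon)
      rw [hs j] at h
      exact absurd h (not_le_of_gt hlt)
    · intro hge
      have h := hmono q (s j) hge
      rw [hs j] at h
      exact h
  -- main counting identity : rPerm s p q + m' = A + f
  have main : ∀ (τ : Fin n → Fin k) (s : Equiv.Perm (Fin n)),
      (∀ l, τ₁ (s l) = τ l) →
      rPerm s p q + (Finset.univ.filter (fun j : Fin n => j ≤ p ∧ τ j = c ∧ s j < q)).card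
        = (Finset.univ.filter (fun j : Fin n => j ≤ p ∧ c < τ j)).card
          + (Finset.univ.filter (fun j : Fin n => j ≤ p ∧ τ j = c)).card := by
    intro τ s hs
    have e1 : (Finset.univ.filter (fun j : Fin n => j ≤ p ∧ q ≤ s j))
        = (Finset.univ.filter (fun j : Fin n => j ≤ p ∧ c < τ j))
          ∪ (Finset.univ.filter (fun j : Fin n => j ≤ p ∧ τ j = c ∧ q ≤ s j)) := by
      ext j
      simp only [Finset.mem_filter, Finset.mem_univ, true_and, Finset.mem_union]
      constructor
      · rintro ⟨hjp, hq⟩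
        rcases lt_or_eq_of_le ((facts τ s hs j).2 hq) with h | h
        · exact Or.inl ⟨hjp, h⟩
        · exact Or.inr ⟨hjp, h.symm, hq⟩
      · rintro (⟨hjp, h⟩ | ⟨hjp, _, hq⟩)
        · exact ⟨hjp, (facts τ s hs j).1 h⟩
        · exact ⟨hjp, hq⟩
    have d1 : Disjoint (Finset.univ.filter (fun j : Fin n => j ≤ p ∧ c < τ j))
        (Finset.univ.filter (fun j : Fin n => j ≤ p ∧ τ j = c ∧ q ≤ s j)) := by
      rw [Finset.disjoint_left]
      intro j h1 h2
      simp only [Finset.mem_filter, Finset.mem_univ, true_and] at h1 h2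
      exact absurd h2.2.1 (ne_of_gt h1.2)
    have e2 : (Finset.univ.filter (fun j : Fin n => j ≤ p ∧ τ j = c))
        = (Finset.univ.filter (fun j : Fin n => j ≤ p ∧ τ j = c ∧ q ≤ s j))
          ∪ (Finset.univ.filter (fun j : Fin n => j ≤ p ∧ τ j = c ∧ s j < q)) := by
      ext j
      simp only [Finset.mem_filter, Finset.mem_univ, true_and, Finset.mem_union]
      constructor
      · rintro ⟨hjp, hjc⟩
        rcases le_or_gt q (s j) with h | h
        · exact Or.inl ⟨hjp, hjc, h⟩
        · exact Or.inr ⟨hjp, hjc, h⟩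
      · rintro (⟨hjp, hjc, _⟩ | ⟨hjp, hjc, _⟩) <;> exact ⟨hjp, hjc⟩
    have d2 : Disjoint (Finset.univ.filter (fun j : Fin n => j ≤ p ∧ τ j = c ∧ q ≤ s j))
        (Finset.univ.filter (fun j : Fin n => j ≤ p ∧ τ j = c ∧ s j < q)) := by
      rw [Finset.disjoint_left]
      intro j h1 h2
      simp only [Finset.mem_filter, Finset.mem_univ, true_and] at h1 h2
      exact absurd h2.2.2 (not_lt_of_ge h1.2.2)
    have c1 : rPerm s p q
        = (Finset.univ.filter (fun j : Fin n => j ≤ p ∧ c < τ j)).card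
          + (Finset.univ.filter (fun j : Fin n => j ≤ p ∧ τ j = c ∧ q ≤ s j)).card := by
      rw [rPerm, e1, Finset.card_union_of_disjoint d1]
    have c2 : (Finset.univ.filter (fun j : Fin n => j ≤ p ∧ τ j = c)).card
        = (Finset.univ.filter (fun j : Fin n => j ≤ p ∧ τ j = c ∧ q ≤ s j)).card
          + (Finset.univ.filter (fun j : Fin n => j ≤ p ∧ τ j = c ∧ s j < q)).card := by
      rw [e2, Finset.card_union_of_disjoint d2]
    omega
  -- B = A + f, where B = rMulti τ p c
  have hB : ∀ (τ : Fin n → Fin k),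
      rMulti τ p c = (Finset.univ.filter (fun j : Fin n => j ≤ p ∧ c < τ j)).card
        + (Finset.univ.filter (fun j : Fin n => j ≤ p ∧ τ j = c)).card := by
    intro τ
    have e : (Finset.univ.filter (fun j : Fin n => j ≤ p ∧ c ≤ τ j))
        = (Finset.univ.filter (fun j : Fin n => j ≤ p ∧ c < τ j))
          ∪ (Finset.univ.filter (fun j : Fin n => j ≤ p ∧ τ j = c)) := by
      ext j
      simp only [Finset.mem_filter, Finset.mem_univ, true_and, Finset.mem_union]
      constructor
      · rintro ⟨hjp, hq⟩
        rcases lt_or_eq_of_le hq with h | h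
        · exact Or.inl ⟨hjp, h⟩
        · exact Or.inr ⟨hjp, h.symm⟩
      · rintro (⟨hjp, h⟩ | ⟨hjp, h⟩)
        · exact ⟨hjp, le_of_lt h⟩
        · exact ⟨hjp, le_of_eq h.symm⟩
    have d : Disjoint (Finset.univ.filter (fun j : Fin n => j ≤ p ∧ c < τ j))
        (Finset.univ.filter (fun j : Fin n => j ≤ p ∧ τ j = c)) := by
      rw [Finset.disjoint_left]
      intro j h1 h2
      simp only [Finset.mem_filter, Finset.mem_univ, true_and] at h1 h2
      exact absurd h2.2 (ne_of_gt h1.2)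
    rw [rMulti, e, Finset.card_union_of_disjoint d]
  -- A_ξ ≤ A_ζ
  have hA : (Finset.univ.filter (fun j : Fin n => j ≤ p ∧ c < ξ j)).card
      ≤ (Finset.univ.filter (fun j : Fin n => j ≤ p ∧ c < ζ j)).card := by
    by_cases hck : c.val + 1 < k
    · have eq1 : ∀ (τ : Fin n → Fin k),
          (Finset.univ.filter (fun j : Fin n => j ≤ p ∧ c < τ j))
            = (Finset.univ.filter (fun j : Fin n => j ≤ p ∧ (⟨c.val + 1, hck⟩ : Fin k) ≤ τ j)) := by
        intro τ
        ext j
        simp only [Finset.mem_filter, Finset.mem_univ, true_and, Fin.lt_def, Fin.le_def]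
        omega
      rw [eq1 ξ, eq1 ζ]
      exact hle p ⟨c.val + 1, hck⟩
    · have : (Finset.univ.filter (fun j : Fin n => j ≤ p ∧ c < ξ j)) = ∅ := by
        apply Finset.filter_false_of_mem
        intro j _
        rintro ⟨_, hlt⟩
        have := (ξ j).isLt
        rw [Fin.lt_def] at hlt
        omega
      rw [this]
      simp
  -- card T = m, with s a bijection
  have hTm : ∀ (τ : Fin n → Fin k) (s : Equiv.Perm (Fin n)),
      (∀ l, τ₁ (s l) = τ l) →
      (Finset.univ.filter (fun j : Fin n => τ j = c ∧ s j < q)).card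
        = (Finset.univ.filter (fun l : Fin n => τ₁ l = c ∧ l < q)).card := by
    intro τ s hs
    apply Finset.card_bij (fun j _ => s j)
    · intro j hj
      simp only [Finset.mem_filter, Finset.mem_univ, true_and] at hj ⊢
      exact ⟨by rw [hs j]; exact hj.1, hj.2⟩
    · intro a _ b _ hab
      exact s.injective hab
    · intro l hl
      simp only [Finset.mem_filter, Finset.mem_univ, true_and] at hl
      refine ⟨s.symm l, ?_, by simp⟩
      simp only [Finset.mem_filter, Finset.mem_univ, true_and]
      constructor
      · rw [← hs (s.symm l)] at *
        simp only [Equiv.apply_symm_apply]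
        exact hl.1
      · simp only [Equiv.apply_symm_apply]
        exact hl.2
  -- m'_ζ ≤ m
  have hmζ : (Finset.univ.filter (fun j : Fin n => j ≤ p ∧ ζ j = c ∧ sζ j < q)).card
      ≤ (Finset.univ.filter (fun l : Fin n => τ₁ l = c ∧ l < q)).card := by
    rw [← hTm ζ sζ hsζ1]
    apply Finset.card_le_card
    intro j hj
    simp only [Finset.mem_filter, Finset.mem_univ, true_and] at hj ⊢
    exact ⟨hj.2.1, hj.2.2⟩
  -- m' ≤ f for ζ (needed when A side dominates)
  have hmfζ : (Finset.univ.filter (fun j : Fin n => j ≤ p ∧ ζ j = c ∧ sζ j < q)).card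
      ≤ (Finset.univ.filter (fun j : Fin n => j ≤ p ∧ ζ j = c)).card := by
    apply Finset.card_le_card
    intro j hj
    simp only [Finset.mem_filter, Finset.mem_univ, true_and] at hj ⊢
    exact ⟨hj.1, hj.2.1⟩
  -- lower bound on m'_ξ : f_ξ ≤ m'_ξ or m ≤ m'_ξ
  have hmξ : (Finset.univ.filter (fun j : Fin n => j ≤ p ∧ ξ j = c)).card
        ≤ (Finset.univ.filter (fun j : Fin n => j ≤ p ∧ ξ j = c ∧ sξ j < q)).card
      ∨ (Finset.univ.filter (fun l : Fin n => τ₁ l = c ∧ l < q)).card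
        ≤ (Finset.univ.filter (fun j : Fin n => j ≤ p ∧ ξ j = c ∧ sξ j < q)).card := by
    by_cases hall : ∀ j' ∈ Finset.univ.filter (fun j : Fin n => ξ j = c ∧ sξ j < q), j' ≤ p
    · right
      rw [← hTm ξ sξ hsξ1]
      apply Finset.card_le_card
      intro j hj
      have hjp := hall j hj
      simp only [Finset.mem_filter, Finset.mem_univ, true_and] at hj ⊢
      exact ⟨hjp, hj.1, hj.2⟩
    · left
      push_neg at hall
      obtain ⟨j', hj'T, hj'p⟩ := hall
      simp only [Finset.mem_filter, Finset.mem_univ, true_and] at hj'T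
      apply Finset.card_le_card
      intro j hj
      simp only [Finset.mem_filter, Finset.mem_univ, true_and] at hj ⊢
      refine ⟨hj.1, hj.2, ?_⟩
      have hlt : j < j' := lt_of_le_of_lt hj.1 hj'p
      have h := hsξ2 j j' hlt (by rw [hj.2, hj'T.1])
      exact lt_trans h hj'T.2
  have mξ := main ξ sξ hsξ1
  have mζ := main ζ sζ hsζ1
  have hBle := hle p c
  rw [hB ξ, hB ζ] at hBle
  omega
end

section
/- Let L be a real symmetric n×n matrix and let B(L) be the matrix with B(L)_{ij} = L_{ij} for i < j, B(L)_{ij} = −L_{ij} for i > j, and B(L)_{ii} = 0. Then the commutator [B(L), L] = B(L)L − L B(L) vanishes if and only if L is a diagonal matrix. (The equilibrium points of the full symmetric Toda flow L' = [B(L), L] are exactly the diagonal matrices.) -/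
open Matrix

/-- The skew part `B(L) = L₊ - L₋` of a matrix: `B(L)_{ij} = L_{ij}` for `i < j`,
`-L_{ij}` for `i > j`, and `0` on the diagonal. -/
def skewPart {n : ℕ} (L : Matrix (Fin n) (Fin n) ℝ) : Matrix (Fin n) (Fin n) ℝ :=
  Matrix.of fun i j => if i < j then L i j else if j < i then -(L i j) else 0

/-- for a real symmetric matrix `L`, the commutator `[B(L), L]` vanishes
if and only if `L` is diagonal (the equilibria of the full symmetric Toda flow are
exactly the diagonal matrices). -/
theorem toda_equilibria_are_diagonal {n : ℕ} (L : Matrix (Fin n) (Fin n) ℝ)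
    (hL : L.IsSymm) :
    skewPart L * L - L * skewPart L = 0 ↔ L.IsDiag := by
  have hsym : ∀ i j : Fin n, L i j = L j i := by
    intro i j
    have := hL
    rw [Matrix.IsSymm] at this
    calc L i j = Lᵀ j i := rfl
    _ = L j i := by rw [this]
  constructor
  · intro h
    have key : ∀ m : ℕ, ∀ i : Fin n, i.val = m → ∀ j : Fin n, i ≠ j → L i j = 0 := by
      intro m
      induction m using Nat.strong_induction_on with
      | _ m ih =>
        intro i him j hij
        have hlow : ∀ k : Fin n, k < i → L i k = 0 := by
          intro k hk
          have hk' : (k : ℕ) < m := him ▸ hk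
          have := ih k.val hk' k rfl i (Fin.ne_of_lt hk)
          rw [hsym i k, this]
        have hMii : (skewPart L * L - L * skewPart L) i i = 0 := by
          rw [h]; rfl
        have hterm : ∀ k : Fin n,
            skewPart L i k * L k i - L i k * skewPart L k i
              = 2 * (if i < k then L i k ^ 2 else 0) := by
          intro k
          have hs : L k i = L i k := (hsym i k).symm
          simp only [skewPart, of_apply]
          rcases lt_trichotomy i k with h1 | h1 | h1
          · rw [if_pos h1, if_neg (not_lt.mpr h1.le), if_pos h1, if_pos h1, hs]
            ring
          · subst h1
            simp
          · have hz : L i k = 0 := hlow k h1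
            rw [if_neg (not_lt.mpr h1.le), if_pos h1, if_pos h1,
                if_neg (not_lt.mpr h1.le), hs, hz]
            ring
        have hsum : ∑ k : Fin n, (2 * (if i < k then L i k ^ 2 else 0)) = 0 := by
          rw [← Finset.sum_congr rfl fun k _ => hterm k]
          simpa [Matrix.sub_apply, Matrix.mul_apply, Finset.sum_sub_distrib] using hMii
        have hsum' : ∑ k : Fin n, (if i < k then L i k ^ 2 else 0) = 0 := by
          rw [← Finset.mul_sum] at hsum
          linarith
        have heach : ∀ k : Fin n, (if i < k then L i k ^ 2 else 0) = 0 := by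
          have hnn : ∀ k ∈ Finset.univ, (0:ℝ) ≤ (if i < k then L i k ^ 2 else 0) := by
            intro k _
            split
            · exact sq_nonneg _
            · exact le_refl 0
          intro k
          exact (Finset.sum_eq_zero_iff_of_nonneg hnn).mp hsum' k (Finset.mem_univ k)
        rcases lt_or_gt_of_ne hij with hlt | hgt
        · have := heach j
          rw [if_pos hlt] at this
          exact pow_eq_zero_iff (two_ne_zero) |>.mp this
        · exact hlow j hgt
    intro i j hij
    exact key i.val i rfl j hij
  · intro hdiag
    have hB : skewPart L = 0 := by
      ext i j
      simp only [skewPart, of_apply, Matrix.zero_apply]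
      rcases lt_trichotomy i j with h1 | h1 | h1
      · rw [if_pos h1]
        exact hdiag (Fin.ne_of_lt h1)
      · subst h1; simp
      · rw [if_neg (not_lt.mpr h1.le), if_pos h1, hdiag (Fin.ne_of_gt h1), neg_zero]
    rw [hB]
    simp
end

section
/- Let L be a real symmetric n×n matrix, let B(L) be the matrix with B(L)_{ij} = L_{ij} for i < j, B(L)_{ij} = −L_{ij} for i > j, B(L)_{ii} = 0, and let N = diag(0,1,…,n−1). Then Tr([B(L), L]·N) = 2·Σ_{1 ≤ i < j ≤ n} (i − j)·L_{ij}². In particular, along any solution of the full symmetric Toda flow L'(t) = [B(L(t)), L(t)] with L(t) symmetric, the function t ↦ Tr(L(t)·N) has derivative 2·Σ_{i<j} (i − j)·L(t)_{ij}² ≤ 0. -/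
open Matrix

/-- `N = diag(0, 1, …, n-1)`. -/
def Nmat (n : ℕ) : Matrix (Fin n) (Fin n) ℝ :=
  Matrix.diagonal fun i : Fin n => ((i : ℕ) : ℝ)

/-- `Σ_{i<j} (i - j) · L_{ij}²`. -/
noncomputable def todaSum {n : ℕ} (L : Matrix (Fin n) (Fin n) ℝ) : ℝ :=
  ∑ p ∈ Finset.univ.filter (fun p : Fin n × Fin n => p.1 < p.2),
    (((p.1 : ℕ) : ℝ) - ((p.2 : ℕ) : ℝ)) * (L p.1 p.2) ^ 2

lemma trace_mul_Nmat {n : ℕ} (A : Matrix (Fin n) (Fin n) ℝ) :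
    Matrix.trace (A * Nmat n) = ∑ i, A i i * ((i : ℕ) : ℝ) := by
  simp [Matrix.trace, Nmat, Matrix.mul_apply, Matrix.diag, Matrix.diagonal,
    Finset.sum_ite_eq, mul_comm]

lemma key {n : ℕ} (M : Matrix (Fin n) (Fin n) ℝ) (hM : M.IsSymm) :
    Matrix.trace ((skewPart M * M - M * skewPart M) * Nmat n) = 2 * todaSum M := by
  have hMs : ∀ i j, M j i = M i j := fun i j => by
    conv_lhs => rw [← hM]
    rfl
  rw [trace_mul_Nmat]
  have hterm : ∀ i j : Fin n,
      (skewPart M i j * M j i - M i j * skewPart M j i) =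
        2 * (skewPart M i j * M i j) := by
    intro i j
    rcases lt_trichotomy i j with h | h | h
    · simp [skewPart, h, not_lt.mpr h.le, hMs i j]; ring
    · simp [skewPart, h]
    · simp [skewPart, h, not_lt.mpr h.le, hMs i j]; ring
  have step1 : ∑ i, (skewPart M * M - M * skewPart M) i i * ((i : ℕ) : ℝ)
      = ∑ i, ∑ j, 2 * (skewPart M i j * M i j) * ((i : ℕ) : ℝ) := by
    refine Finset.sum_congr rfl fun i _ => ?_
    rw [Matrix.sub_apply, Matrix.mul_apply, Matrix.mul_apply, ← Finset.sum_sub_distrib,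
      Finset.sum_mul]
    exact Finset.sum_congr rfl fun j _ => by rw [hterm i j]
  rw [step1]
  rw [← Finset.sum_product', Finset.univ_product_univ]
  rw [← Finset.sum_filter_add_sum_filter_not _ (fun p : Fin n × Fin n => p.1 < p.2)]
  have hswap : ∑ p ∈ Finset.univ.filter (fun p : Fin n × Fin n => ¬ p.1 < p.2),
      2 * (skewPart M p.1 p.2 * M p.1 p.2) * ((p.1 : ℕ) : ℝ)
      = ∑ p ∈ Finset.univ.filter (fun p : Fin n × Fin n => p.1 < p.2),
      2 * (skewPart M p.2 p.1 * M p.2 p.1) * ((p.2 : ℕ) : ℝ) := by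
    have hzero : ∀ i : Fin n, skewPart M i i = 0 := by
      intro i; simp [skewPart]
    rw [← Finset.sum_filter_add_sum_filter_not _ (fun p : Fin n × Fin n => p.2 < p.1)]
    have h2 : ∑ p ∈ (Finset.univ.filter (fun p : Fin n × Fin n => ¬ p.1 < p.2)).filter
        (fun p : Fin n × Fin n => ¬ p.2 < p.1),
        2 * (skewPart M p.1 p.2 * M p.1 p.2) * ((p.1 : ℕ) : ℝ) = 0 := by
      refine Finset.sum_eq_zero fun p hp => ?_
      simp only [Finset.mem_filter] at hp
      have : p.1 = p.2 := le_antisymm (not_lt.mp hp.2) (not_lt.mp hp.1.2)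
      rw [← this, hzero]; ring
    rw [h2, add_zero]
    refine Finset.sum_nbij' (fun p => (p.2, p.1)) (fun p => (p.2, p.1)) ?_ ?_ ?_ ?_ ?_
    · intro p hp; simp only [Finset.mem_filter, Finset.mem_univ, true_and] at hp ⊢
      exact hp.2
    · intro p hp; simp only [Finset.mem_filter, Finset.mem_univ, true_and] at hp ⊢
      exact ⟨not_lt.mpr hp.le, hp⟩
    · intro p _; rfl
    · intro p _; rfl
    · intro p _; rfl
  rw [hswap, ← Finset.sum_add_distrib, todaSum, Finset.mul_sum]
  refine Finset.sum_congr rfl fun p hp => ?_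
  simp only [Finset.mem_filter] at hp
  have h := hp.2
  simp only [skewPart, Matrix.of_apply, h, if_pos, not_lt.mpr h.le, if_neg, if_false,
    lt_irrefl]
  rw [hMs p.2 p.1]
  ring

/-- for any real symmetric `M` one has
`Tr([B(M), M]·N) = 2·Σ_{i<j} (i-j)·M_{ij}²`; consequently along any symmetric solution of
the full symmetric Toda flow `L' = [B(L), L]`, the function `t ↦ Tr(L(t)·N)` has
derivative `2·Σ_{i<j} (i-j)·L(t)_{ij}² ≤ 0`. -/
theorem trace_commutator_N_eq_and_monotone {n : ℕ}
    (L : ℝ → Matrix (Fin n) (Fin n) ℝ)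
    (hsym : ∀ t, (L t).IsSymm)
    (hode : ∀ t (i j : Fin n), HasDerivAt (fun s => L s i j)
      ((skewPart (L t) * L t - L t * skewPart (L t)) i j) t) :
    (∀ M : Matrix (Fin n) (Fin n) ℝ, M.IsSymm →
      Matrix.trace ((skewPart M * M - M * skewPart M) * Nmat n) = 2 * todaSum M) ∧
    (∀ t : ℝ, HasDerivAt (fun s => Matrix.trace (L s * Nmat n)) (2 * todaSum (L t)) t ∧
      2 * todaSum (L t) ≤ 0) := by

  refine ⟨fun M hM => key M hM, fun t => ⟨?_, ?_⟩⟩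
  · have h1 : HasDerivAt (fun s => ∑ i, L s i i * ((i : ℕ) : ℝ))
        (∑ i, (skewPart (L t) * L t - L t * skewPart (L t)) i i * ((i : ℕ) : ℝ)) t :=
      HasDerivAt.fun_sum fun i _ => (hode t i i).mul_const _
    have h2 : (∑ i, (skewPart (L t) * L t - L t * skewPart (L t)) i i * ((i : ℕ) : ℝ))
        = 2 * todaSum (L t) := by
      rw [← trace_mul_Nmat, key (L t) (hsym t)]
    rw [h2] at h1
    convert h1 using 1
    ext s
    rw [trace_mul_Nmat]
  · have : todaSum (L t) ≤ 0 := by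
      refine Finset.sum_nonpos fun p hp => ?_
      simp only [Finset.mem_filter] at hp
      have h1 : (((p.1 : ℕ) : ℝ) - ((p.2 : ℕ) : ℝ)) ≤ 0 := by
        have h : (p.1 : ℕ) ≤ (p.2 : ℕ) := hp.2.le
        have := (Nat.cast_le (α := ℝ)).mpr h
        linarith
      exact mul_nonpos_of_nonpos_of_nonneg h1 (sq_nonneg _)
    linarith
end

section
/- Let D be a real diagonal n×n matrix, let N = diag(0,1,…,n−1), and let X be a real antisymmetric n×n matrix. Then the function f(t) = Tr(exp(tX)·D·exp(−tX)·N) satisfies f''(0) = 2·Σ_{1 ≤ i < j ≤ n} X_{ij}²·(j − i)·(D_{ii} − D_{jj}). (With D_{ii} = λ_{w(i)} this is the Hessian of the Toda potential F(Ψ) = Tr(ΨΛΨᵀN) at the permutation point s_w: d²F = Σ_{i<j} θ_{ij}²(λ_{w(i)} − λ_{w(j)})(j − i), up to an overall factor 2.) -/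
open Matrix NormedSpace

attribute [local instance] Matrix.linftyOpNormedRing Matrix.linftyOpNormedAlgebra

lemma pair_sum_aux {n : ℕ} (F : Fin n → Fin n → ℝ) (hdiag : ∀ i, F i i = 0) :
    ∑ i, ∑ j, F i j =
      ∑ p ∈ Finset.univ.filter (fun p : Fin n × Fin n => p.1 < p.2), (F p.1 p.2 + F p.2 p.1) := by
  have h0 : ∑ i, ∑ j, F i j = ∑ p : Fin n × Fin n, F p.1 p.2 := by
    rw [← Finset.sum_product']; rfl
  rw [h0, ← Finset.sum_filter_add_sum_filter_not Finset.univ (fun p : Fin n × Fin n => p.1 < p.2),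
    Finset.sum_add_distrib]
  congr 1
  have hsub : (Finset.univ.filter (fun p : Fin n × Fin n => p.2 < p.1)) ⊆
      (Finset.univ.filter (fun p : Fin n × Fin n => ¬ p.1 < p.2)) := by
    intro p hp
    simp only [Finset.mem_filter, Finset.mem_univ, true_and] at hp ⊢
    exact not_lt_of_gt hp
  rw [← Finset.sum_subset hsub (by
    intro p hp hnp
    simp only [Finset.mem_filter, Finset.mem_univ, true_and] at hp hnp
    have : p.1 = p.2 := le_antisymm (not_lt.mp hnp) (not_lt.mp hp)
    rw [show p = (p.1, p.1) from by rw [Prod.ext_iff]; exact ⟨rfl, this.symm⟩]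
    exact hdiag p.1)]
  apply Finset.sum_nbij' (fun p => Prod.swap p) (fun p => Prod.swap p) <;>
    simp [Finset.mem_filter]

lemma aux_deriv {n : ℕ} (X A Nd : Matrix (Fin n) (Fin n) ℝ) (t : ℝ) :
    HasDerivAt (fun t : ℝ => Matrix.trace (exp (t • X) * A * exp (-(t • X)) * Nd))
      (Matrix.trace (exp (t • X) * (X * A - A * X) * exp (-(t • X)) * Nd)) t := by
  have h1 : HasDerivAt (fun t : ℝ => exp (t • X)) (exp (t • X) * X) t :=
    hasDerivAt_exp_smul_const X t
  have h2 : HasDerivAt (fun t : ℝ => exp (-(t • X))) ((-X) * exp (-(t • X))) t := by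
    have := hasDerivAt_exp_smul_const' (-X) t
    simp only [smul_neg, neg_mul] at this ⊢
    exact this
  have hg := ((h1.mul_const A).mul h2).mul_const Nd
  set φ : Matrix (Fin n) (Fin n) ℝ →L[ℝ] ℝ :=
    LinearMap.toContinuousLinearMap (Matrix.traceLinearMap (Fin n) ℝ ℝ) with hphi
  have hc := φ.hasFDerivAt.comp_hasDerivAt t hg
  have heq : ∀ M : Matrix (Fin n) (Fin n) ℝ, φ M = Matrix.trace M := fun M => rfl
  simp only [Function.comp_def, heq] at hc
  convert hc using 1
  case e'_9 =>
    congr 1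
    noncomm_ring
  all_goals rfl

/-- for a real diagonal matrix `D = diag(d)`, `N = diag(0,…,n-1)` and an
antisymmetric matrix `X`, the function `f(t) = Tr(e^{tX} D e^{-tX} N)` satisfies
`f''(0) = 2 Σ_{i<j} X_{ij}² (j-i) (d_i - d_j)` (the Hessian of the Toda potential). -/
theorem hessian_of_toda_potential {n : ℕ} (d : Fin n → ℝ)
    (X : Matrix (Fin n) (Fin n) ℝ) (hX : Xᵀ = -X) :
    deriv (deriv (fun t : ℝ =>
        Matrix.trace (NormedSpace.exp (t • X) * Matrix.diagonal d *
          NormedSpace.exp (-(t • X)) * Matrix.diagonal fun i : Fin n => ((i : ℕ) : ℝ)))) 0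
      = 2 * ∑ p ∈ Finset.univ.filter (fun p : Fin n × Fin n => p.1 < p.2),
          (X p.1 p.2) ^ 2 * (((p.2 : ℕ) : ℝ) - ((p.1 : ℕ) : ℝ)) * (d p.1 - d p.2) := by
  have hXa : ∀ i j, X j i = -X i j := by
    intro i j
    have := congrFun (congrFun hX i) j
    simpa [Matrix.transpose_apply] using this
  set Nd : Matrix (Fin n) (Fin n) ℝ := Matrix.diagonal (fun i : Fin n => ((i : ℕ) : ℝ)) with hNd
  set D : Matrix (Fin n) (Fin n) ℝ := Matrix.diagonal d with hD
  set B : Matrix (Fin n) (Fin n) ℝ := X * D - D * X with hB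
  have h1 : deriv (fun t : ℝ => Matrix.trace (exp (t • X) * D * exp (-(t • X)) * Nd)) =
      fun t => Matrix.trace (exp (t • X) * B * exp (-(t • X)) * Nd) :=
    funext fun t => (aux_deriv X D Nd t).deriv
  rw [h1, (aux_deriv X B Nd 0).deriv]
  simp only [zero_smul, neg_zero, exp_zero, one_mul, mul_one]
  have key : Matrix.trace ((X * B - B * X) * Nd) =
      ∑ i, ∑ j, (2 * (X i j * X j i) * (d i - d j) * ((i : ℕ) : ℝ)) := by
    rw [Matrix.trace]
    apply Finset.sum_congr rfl
    intro i _
    simp only [Matrix.diag_apply, hB, hD, hNd, Matrix.sub_apply, Matrix.mul_apply,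
      Matrix.diagonal_apply, ite_mul, mul_ite, zero_mul, mul_zero,
      Finset.sum_ite_eq, Finset.sum_ite_eq', Finset.mem_univ, if_true]
    rw [← Finset.sum_sub_distrib, Finset.sum_mul]
    exact Finset.sum_congr rfl fun j _ => by ring
  rw [key, pair_sum_aux _ (by intro i; simp), Finset.mul_sum]
  apply Finset.sum_congr rfl
  intro p _
  rw [hXa p.1 p.2]
  ring
end

section
/- Let λ < μ be real numbers, let J ⊆ ℝ be an open interval, and let L : J → (real symmetric 3×3 matrices) be differentiable and satisfy the full symmetric Toda equation L'(t) = [B(L(t)), L(t)] for all t ∈ J. Assume that for all t ∈ J one has (L(t) − λ·1)(L(t) − μ·1) = 0 and Tr(L(t)) = 2λ + μ (so L(t) has eigenvalues λ, λ, μ), and that L(t)_{13} ≠ 0 for all t ∈ J. Then the function t ↦ L(t)_{12}·L(t)_{23} / (L(t)_{13})³ is constant on J. (In terms of the matrix entries a_{ij} of the Lax matrix, I = a₁₂a₂₃/a₁₃³ is an integral of motion of the Toda system on ℝP² with λ₁ = λ₂.) -/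
open Matrix

/-- along any solution of the full symmetric Toda flow `L' = [B(L), L]` of
symmetric `3 × 3` matrices with eigenvalues `λ, λ, μ` (`λ < μ`) and `L₁₃ ≠ 0` on an open
interval, the quantity `I = L₁₂·L₂₃ / L₁₃³` is constant (an integral of motion of the
Toda system on `ℝP²`). Indices are 0-based: `L₁₂ = L 0 1`, etc. -/
theorem toda_rp2_integral_of_motion (lam mu : ℝ) (hlm : lam < mu) (a b : ℝ)
    (L : ℝ → Matrix (Fin 3) (Fin 3) ℝ)
    (hsym : ∀ t ∈ Set.Ioo a b, (L t).IsSymm)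
    (hode : ∀ t ∈ Set.Ioo a b, ∀ i j : Fin 3,
      HasDerivAt (fun s => L s i j)
        ((skewPart (L t) * L t - L t * skewPart (L t)) i j) t)
    (heig : ∀ t ∈ Set.Ioo a b,
      (L t - lam • (1 : Matrix (Fin 3) (Fin 3) ℝ)) *
        (L t - mu • (1 : Matrix (Fin 3) (Fin 3) ℝ)) = 0)
    (htr : ∀ t ∈ Set.Ioo a b, Matrix.trace (L t) = 2 * lam + mu)
    (h13 : ∀ t ∈ Set.Ioo a b, L t 0 2 ≠ 0) :
    ∀ t₁ ∈ Set.Ioo a b, ∀ t₂ ∈ Set.Ioo a b,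
      L t₁ 0 1 * L t₁ 1 2 / (L t₁ 0 2) ^ 3 = L t₂ 0 1 * L t₂ 1 2 / (L t₂ 0 2) ^ 3 := by
  set f : ℝ → ℝ := fun s => L s 0 1 * L s 1 2 / (L s 0 2) ^ 3 with hf
  have key : ∀ t ∈ Set.Ioo a b, HasDerivAt f 0 t := by
    intro t ht
    have hS := hsym t ht
    have s10 : L t 1 0 = L t 0 1 := congrFun (congrFun hS.eq 0) 1
    have s20 : L t 2 0 = L t 0 2 := congrFun (congrFun hS.eq 0) 2
    have s21 : L t 2 1 = L t 1 2 := congrFun (congrFun hS.eq 1) 2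
    have d01 := hode t ht 0 1
    have d12 := hode t ht 1 2
    have d02 := hode t ht 0 2
    simp only [skewPart, Matrix.sub_apply, Matrix.mul_apply, Fin.sum_univ_three,
      Matrix.of_apply, show ((0:Fin 3) < 1) from by decide, show ((0:Fin 3) < 2) from by decide,
      show ((1:Fin 3) < 2) from by decide, show ¬((1:Fin 3) < 0) from by decide,
      show ¬((2:Fin 3) < 0) from by decide, show ¬((2:Fin 3) < 1) from by decide,
      lt_irrefl, if_true, if_false, ite_true, ite_false, s10, s20, s21] at d01 d12 d02
    norm_num at d01 d12 d02
    have hM := heig t ht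
    have e01 : L t 0 0 * L t 0 1 + L t 0 1 * L t 1 1 + L t 0 2 * L t 1 2
        - (lam + mu) * L t 0 1 = 0 := by
      have h := congrFun (congrFun hM 0) 1
      simp [Matrix.mul_apply, Matrix.sub_apply, Matrix.smul_apply, Matrix.one_apply,
        Fin.sum_univ_three, s10, s20, s21] at h
      linear_combination h
    have e12 : L t 0 1 * L t 0 2 + L t 1 1 * L t 1 2 + L t 1 2 * L t 2 2
        - (lam + mu) * L t 1 2 = 0 := by
      have h := congrFun (congrFun hM 1) 2
      simp [Matrix.mul_apply, Matrix.sub_apply, Matrix.smul_apply, Matrix.one_apply,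
        Fin.sum_univ_three, s10, s20, s21] at h
      linear_combination h
    have hb := h13 t ht
    have hden : HasDerivAt (fun s => (L s 0 2) ^ 3)
        (3 * (L t 0 2) ^ 2 *
          (L t 0 1 * L t 1 2 + L t 0 2 * L t 2 2 - (L t 0 0 * L t 0 2 + L t 0 1 * L t 1 2))) t := by
      have := d02.pow 3
      exact this.congr_deriv (by norm_num)
    have hdiv := (d01.mul d12).div hden (pow_ne_zero 3 hb)
    have h0 : ((L t 0 1 * L t 1 1 + L t 0 2 * L t 1 2 - (L t 0 0 * L t 0 1 + L t 0 2 * -L t 1 2))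
          * L t 1 2 + L t 0 1 *
          (-L t 0 1 * L t 0 2 + L t 1 2 * L t 2 2 - (L t 0 1 * L t 0 2 + L t 1 1 * L t 1 2)))
          * L t 0 2 ^ 3
        - L t 0 1 * L t 1 2 *
          (3 * (L t 0 2) ^ 2 *
            (L t 0 1 * L t 1 2 + L t 0 2 * L t 2 2 - (L t 0 0 * L t 0 2 + L t 0 1 * L t 1 2))) = 0 := by
      linear_combination (2 * L t 0 2 ^ 3 * L t 1 2) * e01 - (2 * L t 0 2 ^ 3 * L t 0 1) * e12
    refine hdiv.congr_deriv ?_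
    rw [div_eq_iff (by positivity)]
    simp only [Pi.mul_apply]
    linear_combination h0
  intro t₁ ht₁ t₂ ht₂
  have hconv : Convex ℝ (Set.Ioo a b) := convex_Ioo a b
  have hle := hconv.norm_image_sub_le_of_norm_hasDerivWithin_le
    (f' := fun _ => (0:ℝ)) (C := 0)
    (fun x hx => (key x hx).hasDerivWithinAt) (fun x hx => by simp) ht₂ ht₁
  have h1 : |f t₁ - f t₂| ≤ 0 := by simpa using hle
  have h2 : f t₁ - f t₂ = 0 := abs_nonpos_iff.mp h1
  have : f t₁ = f t₂ := by linarith
  simpa [hf] using this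
end

section
/- Let λ ≠ μ be real numbers, Λ = diag(λ, λ, μ), and let Ψ be a real orthogonal 3×3 matrix with Ψ₁₃·Ψ₃₃ ≠ 0. Set L = Ψ Λ Ψᵀ (so L is symmetric with eigenvalues λ, λ, μ). Then L₁₂·L₂₃ / (L₁₃)³ = Ψ₂₃² / ((μ − λ)·Ψ₁₃²·Ψ₃₃²). (This identifies the two expressions for the integral I_{(ℝP², λ₁=λ₂)} of the Toda flow, in the angle variables ψ_{ij} and in the Lax-matrix entries a_{ij}.) -/
open Matrix

/-- for an orthogonal `3 × 3` matrix `Ψ` with `Ψ₁₃·Ψ₃₃ ≠ 0`, `λ ≠ μ`, and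
`L = Ψ·diag(λ,λ,μ)·Ψᵀ`, one has `L₁₂·L₂₃/L₁₃³ = Ψ₂₃²/((μ-λ)·Ψ₁₃²·Ψ₃₃²)`.
Indices are 0-based: `Ψ₁₃ = Ψ 0 2`, `Ψ₂₃ = Ψ 1 2`, `Ψ₃₃ = Ψ 2 2`, etc. -/
theorem toda_rp2_integral_two_expressions (lam mu : ℝ) (hlm : lam ≠ mu)
    (Ψ : Matrix (Fin 3) (Fin 3) ℝ) (hΨ : Ψ * Ψᵀ = 1)
    (hne : Ψ 0 2 * Ψ 2 2 ≠ 0)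
    (L : Matrix (Fin 3) (Fin 3) ℝ)
    (hL : L = Ψ * Matrix.diagonal ![lam, lam, mu] * Ψᵀ) :
    L 0 1 * L 1 2 / (L 0 2) ^ 3
      = (Ψ 1 2) ^ 2 / ((mu - lam) * (Ψ 0 2) ^ 2 * (Ψ 2 2) ^ 2) := by
  have h01 := congrFun (congrFun hΨ 0) 1
  have h12 := congrFun (congrFun hΨ 1) 2
  have h02 := congrFun (congrFun hΨ 0) 2
  simp [Matrix.mul_apply, Fin.sum_univ_three, Matrix.one_apply, Matrix.transpose_apply] at h01 h12 h02
  have e01 : L 0 1 = (mu - lam) * (Ψ 0 2 * Ψ 1 2) := by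
    subst hL
    simp [Matrix.mul_apply, Fin.sum_univ_three, Matrix.diagonal, Matrix.transpose_apply]
    linear_combination lam * h01
  have e12 : L 1 2 = (mu - lam) * (Ψ 1 2 * Ψ 2 2) := by
    subst hL
    simp [Matrix.mul_apply, Fin.sum_univ_three, Matrix.diagonal, Matrix.transpose_apply]
    linear_combination lam * h12
  have e02 : L 0 2 = (mu - lam) * (Ψ 0 2 * Ψ 2 2) := by
    subst hL
    simp [Matrix.mul_apply, Fin.sum_univ_three, Matrix.diagonal, Matrix.transpose_apply]
    linear_combination lam * h02
  have h0 : Ψ 0 2 ≠ 0 := fun h => hne (by simp [h])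
  have h2 : Ψ 2 2 ≠ 0 := fun h => hne (by simp [h])
  have hml : mu - lam ≠ 0 := sub_ne_zero.mpr (Ne.symm hlm)
  rw [e01, e12, e02]
  field_simp
end
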